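/- In Dinkelbach's iteration, define ξ[t] = f(x[t])/g(x[t]) and x[t+1] = argmin_{x∈S}(f(x) − ξ[t]·g(x)), where g > 0 on S. Then ξ[t+1] ≤ ξ[t] for all t, i.e., the sequence of objective values is non-increasing. -/

import Mathlib

/-- Monotonicity of Dinkelbach's iteration: with `ξ[t] = f(x[t])/g(x[t])` and
`x[t+1]` a minimizer of `f − ξ[t]·g` over `S` (where `g > 0` on `S`), the
sequence `ξ[t]` is non-increasing. -/
theorem stmt8 {α : Type*} (S : Set α) (f g : α → ℝ)
    (hg : ∀ x ∈ S, 0 < g x) (x : ℕ → α) (ξ : ℕ → ℝ)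
    (hx : ∀ t, x t ∈ S)
    (hξ : ∀ t, ξ t = f (x t) / g (x t))
    (hmin : ∀ t, IsMinOn (fun y => f y - ξ t * g y) S (x (t + 1))) :
    ∀ t, ξ (t + 1) ≤ ξ t := by
  intro t
  have hgpos := hg (x (t+1)) (hx (t+1))
  have hgt := hg (x t) (hx t)
  have h1 : f (x (t+1)) - ξ t * g (x (t+1)) ≤ f (x t) - ξ t * g (x t) :=
    hmin t (hx t)
  have h2 : f (x t) - ξ t * g (x t) = 0 := by
    rw [hξ t]; field_simp; ring
  rw [hξ (t+1), div_le_iff₀ hgpos]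
  linarith
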